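/- With the same capacity function $c_k$ on ellipsoids as above and $k=qn+r$ ($q\ge 0$, $1\le r\le n$), the ratio $\bm a\mapsto c_k(E(\bm a))/(a_1\cdots a_n)^{1/n}$ attains its global maximum precisely at those tuples $\bm a$ (up to permutation and positive rescaling) with $a_i/a_n=(q+1)/(q+2)$ for $1\le i\le r-1$ and $a_i=a_n$ for $r\le i\le n$. -/

import Mathlib

/-- `ckE a k` : the `k`-th smallest element (with multiplicity) of the multiset of all
positive integer multiples of the entries of `a`. -/
noncomputable def ckE {n : ℕ} (a : Fin n → ℝ) (k : ℕ) : ℝ :=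
  sInf {c : ℝ | k ≤ {p : ℕ × Fin n | 1 ≤ p.1 ∧ (p.1 : ℝ) * a p.2 ≤ c}.ncard}

open Finset

set_option maxHeartbeats 1000000





lemma ncard_eq {n : ℕ} (a : Fin n → ℝ) (ha : ∀ i, 0 < a i) (c : ℝ) :
    {p : ℕ × Fin n | 1 ≤ p.1 ∧ (p.1 : ℝ) * a p.2 ≤ c}.ncard = ∑ j, ⌊c / a j⌋₊ := by
  classical
  have hset : {p : ℕ × Fin n | 1 ≤ p.1 ∧ (p.1 : ℝ) * a p.2 ≤ c}
      = ↑(Finset.univ.biUnion fun j : Fin n =>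
          (Finset.Icc 1 ⌊c / a j⌋₊).image fun m => (m, j)) := by
    ext ⟨m, j⟩
    constructor
    · rintro ⟨h1, h2⟩
      have hm : m ≤ ⌊c / a j⌋₊ := Nat.le_floor ((le_div_iff₀ (ha j)).2 h2)
      exact Finset.mem_coe.2 (Finset.mem_biUnion.2 ⟨j, Finset.mem_univ j,
        Finset.mem_image.2 ⟨m, Finset.mem_Icc.2 ⟨h1, hm⟩, rfl⟩⟩)
    · intro h
      obtain ⟨j', -, h⟩ := Finset.mem_biUnion.1 (Finset.mem_coe.1 h)
      obtain ⟨m', hm', heq⟩ := Finset.mem_image.1 h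
      obtain ⟨rfl, rfl⟩ := Prod.ext_iff.1 heq
      obtain ⟨h1, h2⟩ := Finset.mem_Icc.1 hm'
      have hx : (0:ℝ) ≤ c / a j' := by
        have h0 : 0 < ⌊c / a j'⌋₊ := lt_of_lt_of_le h1 h2
        have := Nat.floor_pos.1 h0
        linarith
      exact ⟨h1, (le_div_iff₀ (ha j')).1 ((Nat.le_floor_iff hx).1 h2)⟩
  rw [hset, Set.ncard_coe_finset, Finset.card_biUnion]
  · refine Finset.sum_congr rfl fun j _ => ?_
    rw [Finset.card_image_of_injective _ (fun x y h => (Prod.ext_iff.1 h).1),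
      Nat.card_Icc]
    omega
  · intro x _ y _ hxy
    simp only [Finset.disjoint_left, Finset.mem_image]
    rintro p ⟨m1, _, rfl⟩ ⟨m2, _, h⟩
    exact hxy ((Prod.ext_iff.1 h).2).symm

noncomputable def Nc {n : ℕ} (a : Fin n → ℝ) (c : ℝ) : ℕ := ∑ j, ⌊c / a j⌋₊

lemma ckE_eq_sInf {n : ℕ} (a : Fin n → ℝ) (ha : ∀ i, 0 < a i) (k : ℕ) :
    ckE a k = sInf {c | k ≤ Nc a c} := by
  unfold ckE Nc
  congr 1
  ext c
  rw [Set.mem_setOf_eq, Set.mem_setOf_eq, ncard_eq a ha]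

lemma ckE_eq_of {n : ℕ} (a : Fin n → ℝ) (ha : ∀ i, 0 < a i) (k : ℕ) (t : ℝ)
    (h1 : k ≤ Nc a t) (h2 : ∀ c, k ≤ Nc a c → t ≤ c) : ckE a k = t := by
  rw [ckE_eq_sInf a ha]
  exact le_antisymm (csInf_le ⟨t, fun c hc => h2 c hc⟩ h1) (le_csInf ⟨t, h1⟩ h2)

lemma natA (q : ℕ) : ∀ e : ℕ, (q+1+e)*(q+1)^e ≤ (q+1)*(q+2)^e ∧
    (2 ≤ e → (q+1+e)*(q+1)^e < (q+1)*(q+2)^e) := by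
  intro e
  induction e with
  | zero => simp
  | succ e ih =>
    obtain ⟨h1, h2⟩ := ih
    have hp : 0 < (q+1)^e := Nat.pow_pos (by omega)
    constructor
    · calc (q+1+(e+1))*(q+1)^(e+1) = ((q+2+e)*(q+1))*(q+1)^e := by ring
        _ ≤ ((q+1+e)*(q+2))*(q+1)^e := by
            have : (q+2+e)*(q+1) ≤ (q+1+e)*(q+2) := by nlinarith
            exact Nat.mul_le_mul_right _ this
        _ = (q+2)*((q+1+e)*(q+1)^e) := by ring
        _ ≤ (q+2)*((q+1)*(q+2)^e) := Nat.mul_le_mul_left _ h1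
        _ = (q+1)*(q+2)^(e+1) := by ring
    · intro he
      have he1 : 1 ≤ e := by omega
      calc (q+1+(e+1))*(q+1)^(e+1) = ((q+2+e)*(q+1))*(q+1)^e := by ring
        _ < ((q+1+e)*(q+2))*(q+1)^e := by
            have h3 : (q+2+e)*(q+1) < (q+1+e)*(q+2) := by nlinarith
            exact Nat.mul_lt_mul_of_lt_of_le h3 le_rfl hp
        _ = (q+2)*((q+1+e)*(q+1)^e) := by ring
        _ ≤ (q+2)*((q+1)*(q+2)^e) := Nat.mul_le_mul_left _ h1
        _ = (q+1)*(q+2)^(e+1) := by ring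

lemma natB (q : ℕ) : ∀ e : ℕ, 1 ≤ e → ∀ m : ℕ, m + e = q + 1 → m*(q+2)^e < (q+1)^(e+1) := by
  intro e
  induction e with
  | zero => omega
  | succ e ih =>
    intro _ m hme
    rcases Nat.eq_zero_or_pos e with rfl | he
    · have hm : m = q := by omega
      subst hm
      simp only [pow_succ, pow_zero, one_mul]
      nlinarith
    · have ihm := ih he (m+1) (by omega)
      have h1 : m*(q+2) ≤ (m+1)*(q+1) := by nlinarith [show m ≤ q+1 by omega]
      calc m*(q+2)^(e+1) = (m*(q+2))*(q+2)^e := by ring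
        _ ≤ ((m+1)*(q+1))*(q+2)^e := Nat.mul_le_mul_right _ h1
        _ = (q+1)*((m+1)*(q+2)^e) := by ring
        _ < (q+1)*(q+1)^(e+1) := by
            exact Nat.mul_lt_mul_of_le_of_lt le_rfl ihm (by omega)
        _ = (q+1)^(e+2) := by ring

lemma key (q : ℕ) {m : ℕ} (hm : 1 ≤ m) :
    (m:ℝ) ≤ ((q:ℝ)+1) * (((q:ℝ)+2)/((q:ℝ)+1)) ^ ((m:ℤ) - (q+1)) ∧
    ((m:ℝ) = ((q:ℝ)+1) * (((q:ℝ)+2)/((q:ℝ)+1)) ^ ((m:ℤ) - (q+1)) → m = q+1 ∨ m = q+2) := by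
  have hq1 : (0:ℝ) < (q:ℝ)+1 := by positivity
  have hq2 : (0:ℝ) < (q:ℝ)+2 := by positivity
  rcases le_or_gt (q+1) m with hge | hlt
  · -- m ≥ q+1
    set e : ℕ := m - (q+1) with he
    have hme : m = q+1+e := by omega
    have hz : (m:ℤ) - (q+1) = (e:ℕ) := by omega
    rw [hz, zpow_natCast]
    have hA := (natA q e).1
    have hA' := fun h2 => (natA q e).2 h2
    have hpow : (0:ℝ) < ((q:ℝ)+1)^e := by positivity
    have hiff : ∀ x : ℝ, (x ≤ ((q:ℝ)+1) * (((q:ℝ)+2)/((q:ℝ)+1)) ^ e ↔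
        x * ((q:ℝ)+1)^e ≤ ((q:ℝ)+1)*((q:ℝ)+2)^e) := by
      intro x
      rw [div_pow, ← mul_div_assoc, le_div_iff₀ hpow]
    constructor
    · rw [hiff]
      have := hA
      have hcast : ((q+1+e : ℕ):ℝ)*((q+1:ℕ):ℝ)^e ≤ ((q+1:ℕ):ℝ)*((q+2:ℕ):ℝ)^e := by
        exact_mod_cast this
      push_cast at hcast
      rw [hme]
      push_cast
      linarith
    · intro heq
      by_contra hne
      push_neg at hne
      have he2 : 2 ≤ e := by omega
      have hstrict := (natA q e).2 he2
      have hcast : ((q+1+e : ℕ):ℝ)*((q+1:ℕ):ℝ)^e < ((q+1:ℕ):ℝ)*((q+2:ℕ):ℝ)^e := by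
        exact_mod_cast hstrict
      push_cast at hcast
      have := (hiff (m:ℝ)).1 (le_of_eq heq)
      have heq2 : (m:ℝ) * ((q:ℝ)+1)^e = ((q:ℝ)+1)*((q:ℝ)+2)^e := by
        have := (hiff (m:ℝ)).2
        -- from heq, equality transfers
        have h3 : (m:ℝ) * ((q:ℝ)+1)^e = (((q:ℝ)+1) * (((q:ℝ)+2)/((q:ℝ)+1)) ^ e) * ((q:ℝ)+1)^e := by
          rw [heq]
        rw [h3, div_pow]
        field_simp
      rw [hme] at heq2
      push_cast at heq2
      linarith
  · -- m ≤ q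
    set e : ℕ := q+1-m with he
    have he1 : 1 ≤ e := by omega
    have hme : m + e = q+1 := by omega
    have hz : (m:ℤ) - (q+1) = -(e:ℕ) := by omega
    rw [hz, zpow_neg, zpow_natCast]
    have hB := natB q e he1 m hme
    have hpow2 : (0:ℝ) < ((q:ℝ)+2)^e := by positivity
    have hcast : ((m:ℕ):ℝ)*((q+2:ℕ):ℝ)^e < ((q+1:ℕ):ℝ)^(e+1) := by exact_mod_cast hB
    push_cast at hcast
    have hval : ((q:ℝ)+1) * ((((q:ℝ)+2)/((q:ℝ)+1)) ^ e)⁻¹ = ((q:ℝ)+1)^(e+1)/((q:ℝ)+2)^e := by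
      rw [div_pow]
      field_simp
      ring
    rw [hval]
    constructor
    · rw [le_div_iff₀ hpow2]
      linarith
    · intro heq
      rw [eq_div_iff (ne_of_gt hpow2)] at heq
      linarith

lemma prod_zpow_sum {ι : Type*} (s : Finset ι) (t : ℝ) (ht : t ≠ 0) (e : ι → ℤ) :
    ∏ j ∈ s, t ^ e j = t ^ (∑ j ∈ s, e j) := by
  classical
  induction s using Finset.induction with
  | empty => simp
  | insert _ _ h ih => rw [Finset.prod_insert h, Finset.sum_insert h, ih, ← zpow_add₀ ht]

lemma prod_eq_of_le {n : ℕ} {f g : Fin n → ℝ} (h0 : ∀ i, 0 < f i) (hle : ∀ i, f i ≤ g i)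
    (he : ∏ i, f i = ∏ i, g i) : ∀ i, f i = g i := by
  intro i
  by_contra hne
  have hlt : f i < g i := lt_of_le_of_ne (hle i) hne
  have : ∏ j, f j < ∏ j, g j :=
    Finset.prod_lt_prod (fun j _ => h0 j) (fun j _ => hle j) ⟨i, Finset.mem_univ i, hlt⟩
  exact absurd he (ne_of_lt this)

lemma discrete {n q r : ℕ} (hn : 1 ≤ n) (hr1 : 1 ≤ r) (hrn : r ≤ n) (m : Fin n → ℕ)
    (h1 : ∀ j, 1 ≤ m j) (hsum : ∑ j, m j ≤ (q+1)*n + (r-1)) :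
    (∏ j, (m j:ℝ)) ≤ ((q:ℝ)+2)^(r-1) * ((q:ℝ)+1)^(n-(r-1)) ∧
    ((∏ j, (m j:ℝ)) = ((q:ℝ)+2)^(r-1) * ((q:ℝ)+1)^(n-(r-1)) →
      (∀ j, m j = q+1 ∨ m j = q+2) ∧ ∑ j, m j = (q+1)*n + (r-1)) := by
  have hq1 : (0:ℝ) < (q:ℝ)+1 := by positivity
  set t : ℝ := ((q:ℝ)+2)/((q:ℝ)+1) with ht_def
  have ht0 : 0 < t := by positivity
  have ht1 : 1 < t := by rw [ht_def, lt_div_iff₀ hq1]; linarith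
  set e : Fin n → ℤ := fun j => (m j : ℤ) - (q+1) with he_def
  set f : Fin n → ℝ := fun j => ((q:ℝ)+1) * t ^ (e j) with hf_def
  have hpt : ∀ j, (m j:ℝ) ≤ f j := fun j => (key q (h1 j)).1
  have hm0 : ∀ j : Fin n, (0:ℝ) < (m j : ℝ) := fun j => by exact_mod_cast h1 j
  have step1 : (∏ j, (m j:ℝ)) ≤ ∏ j, f j :=
    Finset.prod_le_prod (fun j _ => (hm0 j).le) (fun j _ => hpt j)
  have hprodf : ∏ j, f j = ((q:ℝ)+1)^n * t ^ (∑ j, e j) := by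
    rw [hf_def]
    simp only
    rw [Finset.prod_mul_distrib, Finset.prod_const, prod_zpow_sum _ t (ne_of_gt ht0)]
    simp [Finset.card_univ]
  have hSsub : ∑ j, e j = (∑ j, (m j:ℤ)) - ((q:ℤ)+1)*(n:ℤ) := by
    rw [he_def, Finset.sum_sub_distrib, Finset.sum_const, Finset.card_univ, Fintype.card_fin]
    push_cast
    ring
  have hsum_cast : (∑ j, (m j:ℤ)) ≤ ((q:ℤ)+1)*(n:ℤ) + ((r:ℤ)-1) := by
    have h5 : ((∑ j, m j : ℕ):ℤ) ≤ (((q+1)*n + (r-1) : ℕ):ℤ) := Int.ofNat_le.2 hsum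
    push_cast [Nat.cast_sub hr1] at h5
    linarith
  have hE : (∑ j, e j) ≤ ((r:ℤ) - 1) := by rw [hSsub]; linarith
  have step2 : ((q:ℝ)+1)^n * t ^ (∑ j, e j) ≤ ((q:ℝ)+1)^n * t ^ ((r:ℤ)-1) := by
    have hmono := (zpow_right_strictMono₀ ht1).monotone hE
    have hp : (0:ℝ) < ((q:ℝ)+1)^n := by positivity
    exact mul_le_mul_of_nonneg_left hmono hp.le
  have hval : ((q:ℝ)+1)^n * t ^ ((r:ℤ)-1) = ((q:ℝ)+2)^(r-1) * ((q:ℝ)+1)^(n-(r-1)) := by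
    have h1' : (r:ℤ) - 1 = ((r-1 : ℕ) : ℤ) := by omega
    rw [h1', zpow_natCast, ht_def, div_pow]
    have hn' : n = (r-1) + (n-(r-1)) := by omega
    rw [show ((q:ℝ)+1)^n = ((q:ℝ)+1)^((r-1)+(n-(r-1))) by rw [← hn'], pow_add]
    field_simp
  refine ⟨by calc (∏ j, (m j:ℝ)) ≤ ∏ j, f j := step1
      _ = ((q:ℝ)+1)^n * t ^ (∑ j, e j) := hprodf
      _ ≤ ((q:ℝ)+1)^n * t ^ ((r:ℤ)-1) := step2
      _ = _ := hval, ?_⟩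
  intro heq
  have hchain1 : (∏ j, (m j:ℝ)) = ∏ j, f j := by
    refine le_antisymm step1 ?_
    calc ∏ j, f j = ((q:ℝ)+1)^n * t ^ (∑ j, e j) := hprodf
      _ ≤ ((q:ℝ)+1)^n * t ^ ((r:ℤ)-1) := step2
      _ = ((q:ℝ)+2)^(r-1) * ((q:ℝ)+1)^(n-(r-1)) := hval
      _ = (∏ j, (m j:ℝ)) := heq.symm
  have hptEq : ∀ j, (m j:ℝ) = f j := prod_eq_of_le hm0 hpt hchain1
  have hvals : ∀ j, m j = q+1 ∨ m j = q+2 := fun j => (key q (h1 j)).2 (hptEq j)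
  refine ⟨hvals, ?_⟩
  have hEeq : (∑ j, e j) = (r:ℤ) - 1 := by
    by_contra hne
    have hlt : (∑ j, e j) < (r:ℤ)-1 := lt_of_le_of_ne hE hne
    have hstrict : ((q:ℝ)+1)^n * t ^ (∑ j, e j) < ((q:ℝ)+1)^n * t ^ ((r:ℤ)-1) := by
      have hz := zpow_right_strictMono₀ ht1 hlt
      have hp : (0:ℝ) < ((q:ℝ)+1)^n := by positivity
      exact mul_lt_mul_of_pos_left hz hp
    rw [← hprodf, ← hchain1, heq, ← hval] at hstrict
    exact lt_irrefl _ hstrict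
  have hsum_int : (∑ j, (m j:ℤ)) = ((q:ℤ)+1)*(n:ℤ) + ((r:ℤ)-1) := by
    rw [hSsub] at hEeq
    linarith
  have h6 : ((∑ j, m j : ℕ):ℤ) = (((q+1)*n + (r-1) : ℕ):ℤ) := by
    push_cast [Nat.cast_sub hr1]
    linarith
  exact_mod_cast h6

lemma antitone_struct {n q r : ℕ} (hr1 : 1 ≤ r) (hrn : r ≤ n) (m : Fin n → ℕ)
    (hanti : Antitone m) (hv : ∀ j, m j = q+1 ∨ m j = q+2)
    (hsum : ∑ j, m j = (q+1)*n + (r-1)) :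
    ∀ i : Fin n, m i = if (i:ℕ)+2 ≤ r then q+2 else q+1 := by
  classical
  set A : Finset (Fin n) := Finset.univ.filter (fun j => m j = q+2) with hA
  have hterm : ∀ j : Fin n, m j = (q+1) + (if m j = q+2 then 1 else 0) := by
    intro j
    rcases hv j with h | h <;> rw [h] <;> simp <;> omega
  have hcard : A.card = r - 1 := by
    have hs : ∑ j, m j = (q+1)*n + A.card := by
      calc ∑ j, m j = ∑ j, ((q+1) + (if m j = q+2 then 1 else 0)) :=
            Finset.sum_congr rfl (fun j _ => hterm j)
        _ = (q+1)*n + A.card := by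
            rw [Finset.sum_add_distrib, Finset.sum_const, Finset.card_univ, Fintype.card_fin,
              Finset.sum_boole, hA]
            simp [mul_comm]
    omega
  have hmem : ∀ i : Fin n, i ∈ A ↔ (i:ℕ) < r - 1 := by
    intro i
    constructor
    · intro hi
      have hsub : Finset.Iic i ⊆ A := by
        intro j hj
        have hji : j ≤ i := Finset.mem_Iic.1 hj
        have : m i ≤ m j := hanti hji
        have hmi : m i = q+2 := (Finset.mem_filter.1 hi).2
        have : q+2 ≤ m j := hmi ▸ this
        rcases hv j with h | h
        · omega
        · exact Finset.mem_filter.2 ⟨Finset.mem_univ j, h⟩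
      have := Finset.card_le_card hsub
      rw [Fin.card_Iic, hcard] at this
      omega
    · intro hi
      by_contra hni
      have hsub : A ⊆ Finset.Iio i := by
        intro j hj
        rw [Finset.mem_Iio]
        by_contra hij
        push_neg at hij
        have : m i ≥ m j := hanti hij
        have hmj : m j = q+2 := (Finset.mem_filter.1 hj).2
        rcases hv i with h | h
        · omega
        · exact hni (Finset.mem_filter.2 ⟨Finset.mem_univ i, h⟩)
      have := Finset.card_le_card hsub
      rw [Fin.card_Iio, hcard] at this
      omega
  intro i
  by_cases hir : (i:ℕ)+2 ≤ r
  · rw [if_pos hir]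
    have : i ∈ A := (hmem i).2 (by omega)
    exact (Finset.mem_filter.1 this).2
  · rw [if_neg hir]
    have : i ∉ A := fun h => hir (by have := (hmem i).1 h; omega)
    rcases hv i with h | h
    · exact h
    · exact absurd (Finset.mem_filter.2 ⟨Finset.mem_univ i, h⟩) this

lemma filter_card {n r : ℕ} (hr1 : 1 ≤ r) (hrn : r ≤ n) :
    (Finset.univ.filter (fun j : Fin n => (j:ℕ)+2 ≤ r)).card = r - 1 := by
  classical
  have : Finset.univ.filter (fun j : Fin n => (j:ℕ)+2 ≤ r)
      = Finset.Iio (⟨r-1, by omega⟩ : Fin n) := by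
    ext j
    simp [Finset.mem_filter, Finset.mem_Iio, Fin.lt_def]
    omega
  rw [this, Fin.card_Iio]



lemma sum_ite_count {n r : ℕ} (hn : 1 ≤ n) (hr1 : 1 ≤ r) (hrn : r ≤ n) (x y : ℕ) :
    ∑ j : Fin n, (if (j:ℕ)+2 ≤ r then x else y) = (r-1)*x + (n-(r-1))*y := by
  classical
  rw [Finset.sum_ite, Finset.sum_const, Finset.sum_const, filter_card hr1 hrn]
  have h2 : (Finset.univ.filter (fun j : Fin n => ¬((j:ℕ)+2 ≤ r))).card = n - (r-1) := by
    have := Finset.card_filter_add_card_filter_not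
      (s := (Finset.univ : Finset (Fin n))) (p := fun j : Fin n => (j:ℕ)+2 ≤ r)
    rw [filter_card hr1 hrn, Finset.card_univ, Fintype.card_fin] at this
    omega
  rw [h2]
  ring

noncomputable def special (n q r : ℕ) (t : ℝ) : Fin n → ℝ :=
  fun j => if (j:ℕ)+2 ≤ r then t/((q:ℝ)+2) else t/((q:ℝ)+1)

lemma special_pos {n q r : ℕ} {t : ℝ} (ht : 0 < t) : ∀ i, 0 < special n q r t i := by
  intro i
  unfold special
  split <;> positivity

lemma special_mono {n q r : ℕ} {t : ℝ} (ht : 0 < t) : Monotone (special n q r t) := by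
  intro i j hij
  unfold special
  have h1 : t/((q:ℝ)+2) ≤ t/((q:ℝ)+1) := by
    apply div_le_div_of_nonneg_left ht.le (by positivity)
    linarith
  by_cases hi : (i:ℕ)+2 ≤ r
  · by_cases hj : (j:ℕ)+2 ≤ r
    · simp [hi, hj]
    · simp [hi, hj, h1]
  · have hj : ¬((j:ℕ)+2 ≤ r) := by
      intro h
      exact hi (by have := Fin.le_def.1 hij; omega)
    simp [hi, hj]

lemma ckE_special {n k q r : ℕ} (hn : 1 ≤ n) (hk : 1 ≤ k) (hr1 : 1 ≤ r) (hrn : r ≤ n)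
    (hqr : k = q*n+r) (t : ℝ) (ht : 0 < t) :
    ckE (special n q r t) k = t := by
  have hfloor : ∀ (s : ℕ), 0 < s → ⌊t / (t/(s:ℝ))⌋₊ = s := by
    intro s hs
    have hs' : (0:ℝ) < (s:ℝ) := by exact_mod_cast hs
    have : t / (t/(s:ℝ)) = (s:ℝ) := by
      field_simp
    rw [this, Nat.floor_natCast]
  apply ckE_eq_of _ (special_pos ht)
  · -- k ≤ Nc (special) t
    unfold Nc
    have hterm : ∀ j : Fin n, ⌊t / special n q r t j⌋₊ = if (j:ℕ)+2 ≤ r then q+2 else q+1 := by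
      intro j
      unfold special
      split
      · have := hfloor (q+2) (by omega)
        push_cast at this ⊢
        exact this
      · have := hfloor (q+1) (by omega)
        push_cast at this ⊢
        exact this
    calc k ≤ (r-1)*(q+2) + (n-(r-1))*(q+1) := by
          have e1 : (r-1)*(q+2) + (n-(r-1))*(q+1) = (q+1)*n + (r-1) := by
            have hr' : r - 1 ≤ n := by omega
            nlinarith [Nat.sub_add_cancel hr1, Nat.sub_add_cancel hr']
          have e2 : (q+1)*n = q*n + n := by ring
          omega
      _ = ∑ j : Fin n, (if (j:ℕ)+2 ≤ r then q+2 else q+1) :=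
          (sum_ite_count hn hr1 hrn _ _).symm
      _ = ∑ j, ⌊t / special n q r t j⌋₊ := Finset.sum_congr rfl (fun j _ => (hterm j).symm)
  · -- lower bound
    intro c hc
    by_contra hlt
    push_neg at hlt
    have hbound : ∀ j : Fin n, ⌊c / special n q r t j⌋₊ ≤ if (j:ℕ)+2 ≤ r then q+1 else q := by
      intro j
      unfold special
      split
      · have hx : c / (t/((q:ℝ)+2)) < (q:ℝ)+2 := by
          rw [div_lt_iff₀ (by positivity)]
          have ht2 : t = t/((q:ℝ)+2)*((q:ℝ)+2) := by field_simp
          linarith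
        have : ⌊c / (t/((q:ℝ)+2))⌋₊ < q+2 := by
          rw [Nat.floor_lt' (by omega)]
          push_cast
          exact hx
        omega
      · have hx : c / (t/((q:ℝ)+1)) < (q:ℝ)+1 := by
          rw [div_lt_iff₀ (by positivity)]
          have ht2 : t = t/((q:ℝ)+1)*((q:ℝ)+1) := by field_simp
          linarith
        have : ⌊c / (t/((q:ℝ)+1))⌋₊ < q+1 := by
          rw [Nat.floor_lt' (by omega)]
          push_cast
          exact hx
        omega
    have : Nc (special n q r t) c ≤ (r-1)*(q+1) + (n-(r-1))*q := by
      unfold Nc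
      calc ∑ j, ⌊c / special n q r t j⌋₊ ≤ ∑ j : Fin n, (if (j:ℕ)+2 ≤ r then q+1 else q) :=
            Finset.sum_le_sum (fun j _ => hbound j)
        _ = (r-1)*(q+1) + (n-(r-1))*q := sum_ite_count hn hr1 hrn _ _
    have he : (r-1)*(q+1) + (n-(r-1))*q = q*n + (r-1) := by
      have hr' : r - 1 ≤ n := by omega
      nlinarith [Nat.sub_add_cancel hr1, Nat.sub_add_cancel hr']
    omega


lemma main_bound {n k q r : ℕ} (hn : 1 ≤ n) (hk : 1 ≤ k) (hr1 : 1 ≤ r) (hrn : r ≤ n)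
    (hqr : k = q*n+r) (b : Fin n → ℝ) (hb : ∀ i, 0 < b i) (hmono : Monotone b) :
    0 < ckE b k ∧
    ckE b k ^ n ≤ (((q:ℝ)+2)^(r-1)*((q:ℝ)+1)^(n-(r-1))) * ∏ i, b i ∧
    (ckE b k ^ n = (((q:ℝ)+2)^(r-1)*((q:ℝ)+1)^(n-(r-1))) * ∏ i, b i →
      ∀ i : Fin n, b i = if (i:ℕ)+2 ≤ r then ckE b k/((q:ℝ)+2) else ckE b k/((q:ℝ)+1)) := by
  classical
  set P : ℝ := ((q:ℝ)+2)^(r-1)*((q:ℝ)+1)^(n-(r-1)) with hP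
  set S : Set ℝ := {c | k ≤ Nc b c} with hS
  have hc_def : ckE b k = sInf S := ckE_eq_sInf b hb k
  set c : ℝ := ckE b k with hc
  have hj0 : (0:ℕ) < n := hn
  set j0 : Fin n := ⟨0, hj0⟩ with hj0'
  set jmax : Fin n := ⟨n-1, by omega⟩ with hjmax
  -- S nonempty
  have hSne : S.Nonempty := by
    refine ⟨(k:ℝ) * b jmax, ?_⟩
    rw [hS, Set.mem_setOf_eq]
    have hterm : k ≤ ⌊(k:ℝ) * b jmax / b jmax⌋₊ := by
      rw [mul_div_assoc, div_self (ne_of_gt (hb jmax)), mul_one, Nat.floor_natCast]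
    calc k ≤ ⌊(k:ℝ) * b jmax / b jmax⌋₊ := hterm
      _ ≤ Nc b ((k:ℝ) * b jmax) :=
        Finset.single_le_sum (f := fun j => ⌊(k:ℝ) * b jmax / b j⌋₊)
          (fun j _ => Nat.zero_le _) (Finset.mem_univ jmax)
  -- every member of S is ≥ b j0
  have hSlb : ∀ x ∈ S, b j0 ≤ x := by
    intro x hx
    rw [hS, Set.mem_setOf_eq] at hx
    have hex : ∃ j : Fin n, 1 ≤ ⌊x / b j⌋₊ := by
      by_contra hno
      push_neg at hno
      have : Nc b x = 0 := by
        unfold Nc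
        exact Finset.sum_eq_zero (fun j _ => by have := hno j; omega)
      omega
    obtain ⟨j, hj⟩ := hex
    have h1 : (1:ℝ) ≤ x / b j := by
      have := Nat.floor_pos.1 hj
      exact this
    have h2 : b j ≤ x := by
      rw [le_div_iff₀ (hb j)] at h1
      linarith
    exact le_trans (hmono (by exact Fin.mk_le_mk.2 (Nat.zero_le _))) h2
  have hbdd : BddBelow S := ⟨b j0, fun x hx => hSlb x hx⟩
  have hc0 : 0 < c := by
    rw [hc_def]
    exact lt_of_lt_of_le (hb j0) (le_csInf hSne hSlb)
  have hnotmem : ∀ x, x < c → Nc b x < k := by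
    intro x hx
    by_contra hge
    push_neg at hge
    have : c ≤ x := by
      rw [hc_def]
      exact csInf_le hbdd hge
    linarith
  -- the ceiling counts
  set m : Fin n → ℕ := fun j => ⌈c / b j⌉₊ with hm
  have hm1 : ∀ j, 1 ≤ m j := fun j => Nat.ceil_pos.2 (div_pos hc0 (hb j))
  have hmle : ∀ j, c ≤ (m j : ℝ) * b j := by
    intro j
    have := Nat.le_ceil (c / b j)
    rw [div_le_iff₀ (hb j)] at this
    exact this
  have hmlt : ∀ j, ((m j - 1 : ℕ):ℝ) * b j < c := by
    intro j
    have h1 : (m j - 1 : ℕ) < m j := Nat.sub_lt (hm1 j) one_pos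
    have h2 : ((m j - 1 : ℕ):ℝ) < c / b j := Nat.lt_ceil.1 h1
    rw [lt_div_iff₀ (hb j)] at h2
    exact h2
  have hanti : Antitone m := by
    intro i j hij
    apply Nat.ceil_le_ceil
    exact div_le_div_of_nonneg_left hc0.le (hb i) (hmono hij)
  -- sum bound
  have hsum : ∑ j, m j ≤ (q+1)*n + (r-1) := by
    have huniv : (Finset.univ : Finset (Fin n)).Nonempty := ⟨j0, Finset.mem_univ _⟩
    set c1 : ℝ := Finset.univ.sup' huniv (fun j => ((m j - 1 : ℕ):ℝ) * b j) with hc1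
    have hc1lt : c1 < c := by
      rw [hc1, Finset.sup'_lt_iff]
      exact fun j _ => hmlt j
    have hkey : ∀ j, (m j - 1 : ℕ) ≤ ⌊c1 / b j⌋₊ := by
      intro j
      apply Nat.le_floor
      rw [le_div_iff₀ (hb j)]
      exact Finset.le_sup' (fun j => ((m j - 1 : ℕ):ℝ) * b j) (Finset.mem_univ j)
    have hN : Nc b c1 < k := hnotmem c1 hc1lt
    have h1 : ∑ j, (m j - 1) ≤ Nc b c1 := by
      unfold Nc
      exact Finset.sum_le_sum (fun j _ => hkey j)
    have h2 : ∑ j, m j = ∑ j, (m j - 1) + n := by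
      have : ∀ j : Fin n, m j = (m j - 1) + 1 := fun j => by have := hm1 j; omega
      calc ∑ j, m j = ∑ j, ((m j - 1) + 1) := Finset.sum_congr rfl (fun j _ => this j)
        _ = ∑ j, (m j - 1) + n := by
            rw [Finset.sum_add_distrib, Finset.sum_const, Finset.card_univ, Fintype.card_fin,
              smul_eq_mul, mul_one]
    have e2 : (q+1)*n = q*n + n := by ring
    omega
  -- discrete bound
  obtain ⟨hdisc, hdisc_eq⟩ := discrete hn hr1 hrn m hm1 hsum
  have hprodm_pos : (0:ℝ) < ∏ j, (m j:ℝ) :=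
    Finset.prod_pos (fun j _ => by exact_mod_cast hm1 j)
  have hprodb_pos : (0:ℝ) < ∏ j, b j := Finset.prod_pos (fun j _ => hb j)
  have hP_pos : 0 < P := by rw [hP]; positivity
  -- chain : ∏ (c / m j) ≤ ∏ b
  have hterm_le : ∀ j, c / (m j:ℝ) ≤ b j := by
    intro j
    rw [div_le_iff₀ (by exact_mod_cast hm1 j : (0:ℝ) < (m j:ℝ))]
    rw [mul_comm]
    exact hmle j
  have hterm_pos : ∀ j, 0 < c / (m j:ℝ) := by
    intro j
    apply div_pos hc0
    exact_mod_cast hm1 j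
  have hprod_le : ∏ j, (c / (m j:ℝ)) ≤ ∏ j, b j :=
    Finset.prod_le_prod (fun j _ => (hterm_pos j).le) (fun j _ => hterm_le j)
  have hprod_eq : ∏ j, (c / (m j:ℝ)) = c^n / ∏ j, (m j:ℝ) := by
    rw [Finset.prod_div_distrib, Finset.prod_const, Finset.card_univ, Fintype.card_fin]
  have hbound : c^n ≤ P * ∏ i, b i := by
    have h1 : c^n / ∏ j, (m j:ℝ) ≤ ∏ j, b j := hprod_eq ▸ hprod_le
    have h2 : c^n ≤ (∏ j, (m j:ℝ)) * ∏ j, b j := by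
      rw [div_le_iff₀ hprodm_pos] at h1
      linarith [h1]
    calc c^n ≤ (∏ j, (m j:ℝ)) * ∏ j, b j := h2
      _ ≤ P * ∏ j, b j := mul_le_mul_of_nonneg_right hdisc hprodb_pos.le
  refine ⟨hc0, hbound, ?_⟩
  -- equality case
  intro heq
  have hmP : (∏ j, (m j:ℝ)) = P := by
    by_contra hne
    have hlt : (∏ j, (m j:ℝ)) < P := lt_of_le_of_ne hdisc hne
    have : c^n < P * ∏ j, b j := by
      calc c^n ≤ (∏ j, (m j:ℝ)) * ∏ j, b j := by
            have h1 : c^n / ∏ j, (m j:ℝ) ≤ ∏ j, b j := hprod_eq ▸ hprod_le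
            rw [div_le_iff₀ hprodm_pos] at h1
            linarith [h1]
        _ < P * ∏ j, b j := mul_lt_mul_of_pos_right hlt hprodb_pos
    linarith [heq.ge]
  have hprods_eq : ∏ j, (c / (m j:ℝ)) = ∏ j, b j := by
    rw [hprod_eq, hmP]
    rw [heq]
    field_simp
  have hbeq : ∀ j, c / (m j:ℝ) = b j := prod_eq_of_le hterm_pos hterm_le hprods_eq
  obtain ⟨hvals, hsum_eq⟩ := hdisc_eq hmP
  have hstruct := antitone_struct hr1 hrn m hanti hvals hsum_eq
  intro i
  have hmi := hstruct i
  rw [← hbeq i, hmi]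
  by_cases hir : (i:ℕ)+2 ≤ r
  · rw [if_pos hir, if_pos hir]
    push_cast
    ring
  · rw [if_neg hir, if_neg hir]
    push_cast
    ring



lemma prod_special {n q r : ℕ} (hn : 1 ≤ n) (hr1 : 1 ≤ r) (hrn : r ≤ n) (t : ℝ) (ht : 0 < t) :
    (((q:ℝ)+2)^(r-1)*((q:ℝ)+1)^(n-(r-1))) * ∏ j, special n q r t j = t ^ n := by
  classical
  unfold special
  rw [Finset.prod_ite, Finset.prod_const, Finset.prod_const, filter_card hr1 hrn]
  have h2 : (Finset.univ.filter (fun j : Fin n => ¬((j:ℕ)+2 ≤ r))).card = n - (r-1) := by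
    have := Finset.card_filter_add_card_filter_not
      (s := (Finset.univ : Finset (Fin n))) (p := fun j : Fin n => (j:ℕ)+2 ≤ r)
    rw [filter_card hr1 hrn, Finset.card_univ, Fintype.card_fin] at this
    omega
  rw [h2, div_pow, div_pow]
  have hq2 : ((q:ℝ)+2)^(r-1) ≠ 0 := by positivity
  have hq1 : ((q:ℝ)+1)^(n-(r-1)) ≠ 0 := by positivity
  field_simp
  rw [← pow_add]
  congr 1
  omega

lemma ratio_le_of {n : ℕ} (hn : 1 ≤ n) (c C Pi : ℝ) (hc : 0 ≤ c) (hC : 0 < C) (hPi : 0 < Pi)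
    (h : c^n ≤ C * Pi) : c / Pi ^ ((1:ℝ)/(n:ℝ)) ≤ C ^ ((1:ℝ)/(n:ℝ)) := by
  have hn' : (n:ℝ) ≠ 0 := by positivity
  set al : ℝ := (1:ℝ)/(n:ℝ) with hal
  have hal0 : 0 < al := by rw [hal]; positivity
  have h1 : c ≤ (C * Pi) ^ al := by
    have h2 : (c^n : ℝ) ^ al ≤ (C * Pi) ^ al :=
      Real.rpow_le_rpow (by positivity) h hal0.le
    rwa [← Real.rpow_natCast c n, ← Real.rpow_mul hc, mul_one_div, div_self hn',
      Real.rpow_one] at h2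
  rw [Real.mul_rpow hC.le hPi.le] at h1
  rw [div_le_iff₀ (Real.rpow_pos_of_pos hPi al)]
  exact h1

lemma ratio_ge_of {n : ℕ} (hn : 1 ≤ n) (c C Pi : ℝ) (hc : 0 ≤ c) (hC : 0 < C) (hPi : 0 < Pi)
    (h : C ^ ((1:ℝ)/(n:ℝ)) ≤ c / Pi ^ ((1:ℝ)/(n:ℝ))) : C * Pi ≤ c^n := by
  have hn' : (n:ℝ) ≠ 0 := by positivity
  set al : ℝ := (1:ℝ)/(n:ℝ) with hal
  have hal0 : 0 < al := by rw [hal]; positivity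
  have h1 : (C * Pi) ^ al ≤ c := by
    rw [Real.mul_rpow hC.le hPi.le]
    exact (le_div_iff₀ (Real.rpow_pos_of_pos hPi al)).1 h
  have h2 : ((C * Pi) ^ al) ^ n ≤ c ^ n :=
    pow_le_pow_left₀ (by positivity) h1 n
  rwa [← Real.rpow_natCast ((C*Pi)^al) n, ← Real.rpow_mul (by positivity),
    one_div_mul_eq_div, div_self hn', Real.rpow_one] at h2

lemma ratio_eq_of {n : ℕ} (hn : 1 ≤ n) (c C Pi : ℝ) (hc : 0 ≤ c) (hC : 0 < C) (hPi : 0 < Pi)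
    (h : c^n = C * Pi) : c / Pi ^ ((1:ℝ)/(n:ℝ)) = C ^ ((1:ℝ)/(n:ℝ)) := by
  have hn' : (n:ℝ) ≠ 0 := by positivity
  set al : ℝ := (1:ℝ)/(n:ℝ) with hal
  have h1 : c = (C * Pi) ^ al := by
    rw [← h, ← Real.rpow_natCast c n, ← Real.rpow_mul hc, mul_one_div, div_self hn',
      Real.rpow_one]
  rw [h1, Real.mul_rpow hC.le hPi.le, mul_div_assoc, div_self (ne_of_gt (Real.rpow_pos_of_pos hPi al)), mul_one]



/-- The `k`-th capacity ratio attains its global maximum over ellipsoids precisely at the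
tuples (normalized to be ordered; this accounts for permutations, and the condition is
scale-invariant) with `aᵢ/aₙ = (q+1)/(q+2)` for `1 ≤ i ≤ r-1` and `aᵢ = aₙ` for `r ≤ i ≤ n`,
where `k = qn + r` with `q ≥ 0` and `1 ≤ r ≤ n`. -/
theorem stmt2 (n k q r : ℕ) (hn : 1 ≤ n) (hk : 1 ≤ k) (hr1 : 1 ≤ r) (hrn : r ≤ n)
    (hqr : k = q * n + r)
    (a : Fin n → ℝ) (hapos : ∀ i, 0 < a i) (hamono : Monotone a) :
    (∀ b : Fin n → ℝ, (∀ i, 0 < b i) → Monotone b →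
        ckE b k / (∏ i, b i) ^ ((1:ℝ)/(n:ℝ)) ≤ ckE a k / (∏ i, a i) ^ ((1:ℝ)/(n:ℝ)))
      ↔ (∀ i : Fin n,
          ((i : ℕ) + 2 ≤ r → a i / a ⟨n - 1, by omega⟩ = ((q : ℝ) + 1)/((q : ℝ) + 2)) ∧
          (r ≤ (i : ℕ) + 1 → a i = a ⟨n - 1, by omega⟩)) := by
  have hq1 : (0:ℝ) < (q:ℝ)+1 := by positivity
  have hq2 : (0:ℝ) < (q:ℝ)+2 := by positivity
  have hPpos : (0:ℝ) < ((q:ℝ)+2)^(r-1)*((q:ℝ)+1)^(n-(r-1)) := by positivity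
  have hnlt : n - 1 < n := by omega
  have hprodapos : 0 < ∏ i, a i := Finset.prod_pos (fun j _ => hapos j)
  have hlr : ¬(((⟨n-1, hnlt⟩ : Fin n) : ℕ)+2 ≤ r) := by simp only; omega
  constructor
  · intro hmax
    have hb0pos := special_pos (n:=n) (q:=q) (r:=r) (t:=1) one_pos
    have hb0mono := special_mono (n:=n) (q:=q) (r:=r) (t:=1) one_pos
    have h1 := hmax (special n q r 1) hb0pos hb0mono
    have hck0 : ckE (special n q r 1) k = 1 := ckE_special hn hk hr1 hrn hqr 1 one_pos
    have hprod0 : (((q:ℝ)+2)^(r-1)*((q:ℝ)+1)^(n-(r-1))) * ∏ j, special n q r 1 j = 1 := by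
      have := prod_special (q:=q) hn hr1 hrn 1 one_pos
      rw [one_pow] at this
      exact this
    have hprod0pos : 0 < ∏ j, special n q r 1 j := Finset.prod_pos (fun j _ => hb0pos j)
    have hratio0 : ckE (special n q r 1) k / (∏ j, special n q r 1 j) ^ ((1:ℝ)/(n:ℝ))
        = (((q:ℝ)+2)^(r-1)*((q:ℝ)+1)^(n-(r-1))) ^ ((1:ℝ)/(n:ℝ)) := by
      apply ratio_eq_of hn _ _ _ (by rw [hck0]; norm_num) hPpos hprod0pos
      rw [hck0, one_pow, hprod0]
    rw [hratio0] at h1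
    obtain ⟨hca_pos, hbound, heqcase⟩ := main_bound hn hk hr1 hrn hqr a hapos hamono
    have hge := ratio_ge_of hn (ckE a k) _ _ hca_pos.le hPpos hprodapos h1
    have heq : (ckE a k)^n = (((q:ℝ)+2)^(r-1)*((q:ℝ)+1)^(n-(r-1))) * ∏ i, a i :=
      le_antisymm hbound hge
    have hform := heqcase heq
    have hlast := hform ⟨n-1, hnlt⟩
    rw [if_neg hlr] at hlast
    intro i
    constructor
    · intro hir
      have hi := hform i
      rw [if_pos hir] at hi
      rw [hi, hlast]
      have hc0 : ckE a k ≠ 0 := ne_of_gt hca_pos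
      field_simp
    · intro hir
      have hi := hform i
      have hni : ¬((i:ℕ)+2 ≤ r) := by omega
      rw [if_neg hni] at hi
      rw [hi, hlast]
  · intro hcond
    have htpos : 0 < ((q:ℝ)+1) * a ⟨n-1, hnlt⟩ := mul_pos hq1 (hapos _)
    have haeq : a = special n q r (((q:ℝ)+1) * a ⟨n-1, hnlt⟩) := by
      funext i
      unfold special
      obtain ⟨h1, h2⟩ := hcond i
      by_cases hir : (i:ℕ)+2 ≤ r
      · rw [if_pos hir]
        have h3 := h1 hir
        have hne : a ⟨n-1, hnlt⟩ ≠ 0 := ne_of_gt (hapos _)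
        rw [div_eq_div_iff hne (ne_of_gt hq2)] at h3
        field_simp
        linarith [h3]
      · rw [if_neg hir]
        have h3 := h2 (by omega)
        rw [h3]
        field_simp
    intro b hbpos hbmono
    obtain ⟨hcb_pos, hbbound, -⟩ := main_bound hn hk hr1 hrn hqr b hbpos hbmono
    have hprodb : 0 < ∏ i, b i := Finset.prod_pos (fun j _ => hbpos j)
    have hleft := ratio_le_of hn (ckE b k) _ _ hcb_pos.le hPpos hprodb hbbound
    have hcka : ckE a k = ((q:ℝ)+1) * a ⟨n-1, hnlt⟩ := by
      conv_lhs => rw [haeq]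
      exact ckE_special hn hk hr1 hrn hqr _ htpos
    have hproda : (((q:ℝ)+2)^(r-1)*((q:ℝ)+1)^(n-(r-1))) * ∏ i, a i
        = (((q:ℝ)+1) * a ⟨n-1, hnlt⟩)^n := by
      conv_lhs => rw [haeq]
      exact prod_special hn hr1 hrn _ htpos
    have hright : ckE a k / (∏ i, a i) ^ ((1:ℝ)/(n:ℝ))
        = (((q:ℝ)+2)^(r-1)*((q:ℝ)+1)^(n-(r-1))) ^ ((1:ℝ)/(n:ℝ)) := by
      apply ratio_eq_of hn _ _ _ (by rw [hcka]; exact htpos.le) hPpos hprodapos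
      rw [hcka, hproda]
    rw [hright]
    exact hleft
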